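/- arXiv:math/0511001 — 4 statements merged into one kernel-verified Lean document; each statement's English description precedes it below -/
import Mathlib

section
/- Let θ > 0 be irrational with all continued fraction elements a_k ≥ 3, and let p_n/q_n be its convergents. Set T_n = log((p_n θ + q_n)/|q_n θ - p_n|) and l_t(q,p)² = (1/(1+θ²))·((q+θp)²e^{-t} + e^t(p-θq)²). Then for every k ≠ n, l_{T_n}(q_k, p_k)² > l_{T_n}(q_n, p_n)², i.e. the (q_n, p_n)-vector is strictly the shortest among all convergent vectors at time T_n. -/
/-- Data of the continued fraction expansion of `θ`: elements `a`, complete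
quotients `x`, and convergents `p n / q n` given by the standard recursions. -/
structure CFData (θ : ℝ) where
  a : ℕ → ℤ
  x : ℕ → ℝ
  p : ℕ → ℤ
  q : ℕ → ℤ
  x_zero : x 0 = θ
  a_floor : ∀ n, a n = ⌊x n⌋
  x_succ : ∀ n, x (n + 1) = 1 / (x n - a n)
  p_zero : p 0 = a 0
  q_zero : q 0 = 1
  p_one : p 1 = a 1 * a 0 + 1
  q_one : q 1 = a 1
  p_rec : ∀ n, p (n + 2) = a (n + 2) * p (n + 1) + p n
  q_rec : ∀ n, q (n + 2) = a (n + 2) * q (n + 1) + q n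

namespace CFhelp

variable {θ : ℝ}

lemma x_irr (hirr : Irrational θ) (c : CFData θ) : ∀ n, Irrational (c.x n) := by
  intro n
  induction n with
  | zero => rwa [c.x_zero]
  | succ m ih =>
    rw [c.x_succ m, one_div]
    exact (ih.sub_intCast (c.a m)).inv

/-- fractional part of the complete quotient -/
noncomputable def r (c : CFData θ) (n : ℕ) : ℝ := c.x n - c.a n

lemma r_pos (hirr : Irrational θ) (c : CFData θ) (n : ℕ) : 0 < r c n := by
  have h1 : (c.a n : ℝ) ≤ c.x n := by rw [c.a_floor n]; exact Int.floor_le _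
  have h2 : c.x n ≠ (c.a n : ℝ) := (x_irr hirr c n).ne_int _
  have h0 : 0 ≤ r c n := by simpa [r] using h1
  refine h0.lt_of_ne' (fun h => h2 ?_)
  have : c.x n - c.a n = 0 := h
  linarith

lemma x_eq_inv_r (c : CFData θ) (n : ℕ) : c.x (n + 1) = 1 / r c n := c.x_succ n

lemma x_gt_three (hirr : Irrational θ) (c : CFData θ) (ha : ∀ k, 3 ≤ c.a k) (n : ℕ) :
    3 < c.x (n + 1) := by
  have h1 : (c.a (n+1) : ℝ) ≤ c.x (n+1) := by rw [c.a_floor]; exact Int.floor_le _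
  have h2 : (3 : ℝ) ≤ (c.a (n+1) : ℝ) := by exact_mod_cast ha (n+1)
  have h3 : c.x (n+1) ≠ ((3:ℤ) : ℝ) := (x_irr hirr c (n+1)).ne_int 3
  have : (3:ℝ) ≤ c.x (n+1) := le_trans h2 h1
  rcases this.lt_or_eq with h | h
  · exact h
  · exact absurd (by push_cast; linarith) h3

lemma r_lt_third (hirr : Irrational θ) (c : CFData θ) (ha : ∀ k, 3 ≤ c.a k) (n : ℕ) :
    r c n < 1/3 := by
  have hx := x_gt_three hirr c ha n
  have hr := r_pos hirr c n
  have hxe := x_eq_inv_r c n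
  rw [hxe] at hx
  -- 3 < 1 / r, r > 0 ⇒ r < 1/3
  rw [lt_div_iff₀ hr] at hx
  linarith


/-- product of fractional parts -/
noncomputable def E (c : CFData θ) (n : ℕ) : ℝ := ∏ i ∈ Finset.range (n+1), r c i

lemma E_pos (hirr : Irrational θ) (c : CFData θ) (n : ℕ) : 0 < E c n :=
  Finset.prod_pos (fun i _ => r_pos hirr c i)

lemma E_succ (c : CFData θ) (n : ℕ) : E c (n+1) = E c n * r c (n+1) :=
  Finset.prod_range_succ _ _

lemma E_zero (c : CFData θ) : E c 0 = r c 0 := by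
  simp [E]

lemma r_succ_eq (c : CFData θ) (n : ℕ) : r c (n+1) = 1 / r c n - c.a (n+1) := by
  simp [r, x_eq_inv_r]

lemma beta_pair (hirr : Irrational θ) (c : CFData θ) :
    ∀ n, ((c.p n : ℝ) - θ * c.q n = (-1)^(n+1) * E c n) ∧
         ((c.p (n+1) : ℝ) - θ * c.q (n+1) = (-1)^(n+2) * E c (n+1)) := by
  intro n
  induction n with
  | zero =>
    have hr0 : r c 0 = θ - c.a 0 := by simp [r, c.x_zero]
    have hr0ne : θ - (c.a 0 : ℝ) ≠ 0 := by rw [← hr0]; exact (r_pos hirr c 0).ne'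
    constructor
    · rw [c.p_zero, c.q_zero, E_zero, hr0]
      push_cast; ring
    · rw [c.p_one, c.q_one, E_succ, r_succ_eq, E_zero, hr0]
      field_simp
      push_cast; ring
  | succ m ih =>
    refine ⟨ih.2, ?_⟩
    have key : r c (m+1) * r c (m+2) = 1 - c.a (m+2) * r c (m+1) := by
      have hne : r c (m+1) ≠ 0 := (r_pos hirr c (m+1)).ne'
      rw [r_succ_eq c (m+1)]
      field_simp
    have hb1 := ih.1
    have hb2 := ih.2
    have hrec : (c.p (m+2) : ℝ) - θ * c.q (m+2)
        = (c.a (m+2) : ℝ) * ((c.p (m+1) : ℝ) - θ * c.q (m+1))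
          + ((c.p m : ℝ) - θ * c.q m) := by
      rw [c.p_rec m, c.q_rec m]; push_cast; ring
    rw [hrec, hb1, hb2, E_succ c (m+1), E_succ c m]
    linear_combination (-((-1:ℝ)^(m+1) * E c m)) * key

lemma beta_eq (hirr : Irrational θ) (c : CFData θ) (n : ℕ) :
    (c.p n : ℝ) - θ * c.q n = (-1)^(n+1) * E c n := (beta_pair hirr c n).1

lemma abs_beta (hirr : Irrational θ) (c : CFData θ) (n : ℕ) :
    |(c.p n : ℝ) - θ * c.q n| = E c n := by
  rw [beta_eq hirr c n, abs_mul, abs_pow, abs_neg, abs_one, one_pow, one_mul,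
    abs_of_pos (E_pos hirr c n)]

lemma pq_pos (hθ : 0 < θ) (c : CFData θ) (ha : ∀ k, 3 ≤ c.a k) :
    ∀ n, (0 ≤ c.p n ∧ 1 ≤ c.q n) ∧ (0 ≤ c.p (n+1) ∧ 1 ≤ c.q (n+1)) := by
  have ha0 : 0 ≤ c.a 0 := by
    rw [c.a_floor 0, c.x_zero]; exact Int.floor_nonneg.mpr hθ.le
  intro n
  induction n with
  | zero =>
    refine ⟨⟨by rw [c.p_zero]; exact ha0, by rw [c.q_zero]⟩, ?_, ?_⟩
    · rw [c.p_one]; nlinarith [ha 1]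
    · rw [c.q_one]; linarith [ha 1]
  | succ m ih =>
    refine ⟨ih.2, ?_, ?_⟩
    · rw [c.p_rec m]; nlinarith [ha (m+2), ih.1.1, ih.2.1]
    · rw [c.q_rec m]; nlinarith [ha (m+2), ih.1.2, ih.2.2]

/-- the α quantity -/
noncomputable def A (c : CFData θ) (n : ℕ) : ℝ := (c.q n : ℝ) + θ * c.p n

lemma A_pos (hθ : 0 < θ) (c : CFData θ) (ha : ∀ k, 3 ≤ c.a k) (n : ℕ) :
    0 < A c n := by
  have h := (pq_pos hθ c ha n).1
  have h1 : (1 : ℝ) ≤ (c.q n : ℝ) := by exact_mod_cast h.2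
  have h2 : (0 : ℝ) ≤ (c.p n : ℝ) := by exact_mod_cast h.1
  have := mul_nonneg hθ.le h2
  unfold A; linarith

lemma A_step (hθ : 0 < θ) (c : CFData θ) (ha : ∀ k, 3 ≤ c.a k) (n : ℕ) :
    3 * A c n ≤ A c (n+1) := by
  unfold A
  match n with
  | 0 =>
    have ha1 : (3 : ℝ) ≤ (c.a 1 : ℝ) := by exact_mod_cast ha 1
    have ha0 : (0 : ℝ) ≤ (c.a 0 : ℝ) := by
      have := (pq_pos hθ c ha 0).1.1
      rw [c.p_zero] at this
      exact_mod_cast this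
    rw [c.p_zero, c.q_zero, c.p_one, c.q_one]
    push_cast
    nlinarith [mul_nonneg hθ.le ha0, mul_nonneg (mul_nonneg hθ.le ha0) (by linarith : (0:ℝ) ≤ (c.a 1 : ℝ) - 3)]
  | m + 1 =>
    have ham : (3 : ℝ) ≤ (c.a (m+2) : ℝ) := by exact_mod_cast ha (m+2)
    have h1 := A_pos hθ c ha m
    have h2 := A_pos hθ c ha (m+1)
    unfold A at h1 h2
    rw [c.p_rec m, c.q_rec m]
    push_cast
    nlinarith

lemma A_gap (hθ : 0 < θ) (c : CFData θ) (ha : ∀ k, 3 ≤ c.a k) (n : ℕ) :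
    ∀ k, n < k → 3 * A c n ≤ A c k := by
  intro k hk
  induction k with
  | zero => omega
  | succ j ih =>
    rcases (by omega : n = j ∨ n < j) with h | h
    · subst h; exact A_step hθ c ha n
    · have h1 := ih h
      have h2 := A_step hθ c ha j
      have h3 := A_pos hθ c ha j
      linarith

lemma E_step (hirr : Irrational θ) (c : CFData θ) (ha : ∀ k, 3 ≤ c.a k) (n : ℕ) :
    3 * E c (n+1) ≤ E c n := by
  rw [E_succ]
  have h1 := r_lt_third hirr c ha (n+1)
  have h2 := E_pos hirr c n
  nlinarith

lemma E_gap (hirr : Irrational θ) (c : CFData θ) (ha : ∀ k, 3 ≤ c.a k) (k : ℕ) :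
    ∀ n, k < n → 3 * E c n ≤ E c k := by
  intro n hn
  induction n with
  | zero => omega
  | succ j ih =>
    rcases (by omega : k = j ∨ k < j) with h | h
    · subst h; exact E_step hirr c ha k
    · have h1 := ih h
      have h2 := E_step hirr c ha j
      have h3 := E_pos hirr c (j+1)
      linarith

end CFhelp

open CFhelp in
theorem stmt_9 (θ : ℝ) (hθ : 0 < θ) (hirr : Irrational θ) (c : CFData θ)
    (ha : ∀ k, 3 ≤ c.a k) (n k : ℕ) (hk : k ≠ n) :
    (1 / (1 + θ ^ 2)) *
        (((c.q n : ℝ) + θ * c.p n) ^ 2 *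
            Real.exp (-(Real.log (((c.p n : ℝ) * θ + c.q n) / |(c.q n : ℝ) * θ - c.p n|))) +
          Real.exp (Real.log (((c.p n : ℝ) * θ + c.q n) / |(c.q n : ℝ) * θ - c.p n|)) *
            ((c.p n : ℝ) - θ * c.q n) ^ 2) <
      (1 / (1 + θ ^ 2)) *
        (((c.q k : ℝ) + θ * c.p k) ^ 2 *
            Real.exp (-(Real.log (((c.p n : ℝ) * θ + c.q n) / |(c.q n : ℝ) * θ - c.p n|))) +
          Real.exp (Real.log (((c.p n : ℝ) * θ + c.q n) / |(c.q n : ℝ) * θ - c.p n|)) *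
            ((c.p k : ℝ) - θ * c.q k) ^ 2) := by
  have hEn := E_pos hirr c n
  have hEk := E_pos hirr c k
  have hAn := A_pos hθ c ha n
  have hAk := A_pos hθ c ha k
  have habsn : |(c.q n : ℝ) * θ - c.p n| = E c n := by
    rw [show (c.q n : ℝ) * θ - c.p n = -((c.p n : ℝ) - θ * c.q n) by ring, abs_neg,
      abs_beta hirr c n]
  have hAeq : (c.p n : ℝ) * θ + c.q n = A c n := by unfold A; ring
  have hbn : ((c.p n : ℝ) - θ * c.q n) ^ 2 = E c n ^ 2 := by
    rw [← sq_abs, abs_beta hirr c n]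
  have hbk : ((c.p k : ℝ) - θ * c.q k) ^ 2 = E c k ^ 2 := by
    rw [← sq_abs, abs_beta hirr c k]
  have hAn' : ((c.q n : ℝ) + θ * c.p n) = A c n := rfl
  have hAk' : ((c.q k : ℝ) + θ * c.p k) = A c k := rfl
  rw [habsn, hAeq, hbn, hbk, hAn', hAk',
    Real.exp_log (div_pos hAn hEn), Real.exp_neg, Real.exp_log (div_pos hAn hEn), inv_div]
  refine mul_lt_mul_of_pos_left ?_ (by positivity)
  have lhs_eq : A c n ^ 2 * (E c n / A c n) + A c n / E c n * E c n ^ 2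
      = 2 * (A c n * E c n) := by
    field_simp; ring
  have rhs_eq : A c k ^ 2 * (E c n / A c n) + A c n / E c n * E c k ^ 2
      = (A c k ^ 2 * E c n ^ 2 + A c n ^ 2 * E c k ^ 2) / (A c n * E c n) := by
    field_simp
  rw [lhs_eq, rhs_eq, lt_div_iff₀ (by positivity)]
  rcases lt_or_gt_of_ne hk with h | h
  · -- k < n : the E-part dominates
    have h9 : 3 * E c n ≤ E c k := E_gap hirr c ha k n h
    have h99 : 9 * E c n ^ 2 ≤ E c k ^ 2 := by nlinarith
    have hx : A c n ^ 2 * (9 * E c n ^ 2) ≤ A c n ^ 2 * E c k ^ 2 :=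
      mul_le_mul_of_nonneg_left h99 (sq_nonneg _)
    have hpos : (0:ℝ) < A c n ^ 2 * E c n ^ 2 := by positivity
    have hz : (0:ℝ) ≤ A c k ^ 2 * E c n ^ 2 := by positivity
    linarith
  · -- n < k : the A-part dominates
    have h9 : 3 * A c n ≤ A c k := A_gap hθ c ha n k h
    have h99 : 9 * A c n ^ 2 ≤ A c k ^ 2 := by nlinarith
    have hx : E c n ^ 2 * (9 * A c n ^ 2) ≤ E c n ^ 2 * A c k ^ 2 :=
      mul_le_mul_of_nonneg_left h99 (sq_nonneg _)
    have hpos : (0:ℝ) < A c n ^ 2 * E c n ^ 2 := by positivity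
    have hz : (0:ℝ) ≤ A c n ^ 2 * E c k ^ 2 := by positivity
    linarith
end

section
/- Let θ > 0 irrational with convergents p_n/q_n and elements a_k ≥ 3. For k < n, at time T_n = log((p_n θ + q_n)/|q_n θ - p_n|), one has (q_k θ - p_k)²·e^{T_n}/(1+θ²) > 4(p_n θ + q_n)|q_n θ - p_n|/(1+θ²). -/
theorem stmt_10 (θ : ℝ) (hθ : 0 < θ) (hirr : Irrational θ) (c : CFData θ)
    (ha : ∀ k, 3 ≤ c.a k) (n k : ℕ) (hkn : k < n) :
    ((c.q k : ℝ) * θ - c.p k) ^ 2 *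
        Real.exp (Real.log (((c.p n : ℝ) * θ + c.q n) / |(c.q n : ℝ) * θ - c.p n|)) /
        (1 + θ ^ 2) >
      4 * ((c.p n : ℝ) * θ + c.q n) * |(c.q n : ℝ) * θ - c.p n| / (1 + θ ^ 2) := by
  -- irrationality of all complete quotients
  have hxirr : ∀ m, Irrational (c.x m) := by
    intro m
    induction m with
    | zero => rw [c.x_zero]; exact hirr
    | succ m ih =>
      rw [c.x_succ, one_div]
      exact (ih.sub_intCast (c.a m)).inv
  -- a m < x m
  have hax : ∀ m, (c.a m : ℝ) < c.x m := by
    intro m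
    rw [c.a_floor]
    exact lt_of_le_of_ne (Int.floor_le _) (Ne.symm ((hxirr m).ne_int _))
  have hfrac : ∀ m, 0 < c.x m - c.a m ∧ c.x m - c.a m < 1 := by
    intro m
    constructor
    · linarith [hax m]
    · have := Int.lt_floor_add_one (c.x m)
      rw [← c.a_floor] at this
      linarith
  have hx3 : ∀ m, (3 : ℝ) < c.x m := by
    intro m
    have h1 : (3 : ℝ) ≤ (c.a m : ℝ) := by exact_mod_cast ha m
    linarith [hax m]
  have hxpos : ∀ m, 0 < c.x m := fun m => by linarith [hx3 m]
  set β : ℕ → ℝ := fun m => (c.q m : ℝ) * θ - c.p m with hβdef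
  have hβ0 : β 0 = c.x 0 - c.a 0 := by
    simp only [hβdef, c.p_zero, c.q_zero, c.x_zero]
    push_cast
    ring
  -- inverse relation: 1/x(m+1) = x m - a m
  have hinv : ∀ m, 1 / c.x (m + 1) = c.x m - c.a m := by
    intro m
    rw [c.x_succ]
    rw [one_div_one_div]
  -- recursion for β
  have hβrec : ∀ m, β (m + 2) = (c.a (m + 2) : ℝ) * β (m + 1) + β m := by
    intro m
    simp only [hβdef, c.p_rec, c.q_rec]
    push_cast
    ring
  -- key step: β (m+1) = -β m / x (m+2)
  have hstep : ∀ m, β (m + 1) = -β m / c.x (m + 2) := by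
    intro m
    induction m with
    | zero =>
      have h1 : β 1 = (c.a 1 : ℝ) * β 0 - 1 := by
        simp only [hβdef, c.p_one, c.q_one, c.q_zero, c.p_zero]
        push_cast
        ring
      have h2 : 1 / c.x 2 = c.x 1 - c.a 1 := hinv 1
      have h3 : 1 / c.x 1 = c.x 0 - c.a 0 := hinv 0
      have hne1 : c.x 1 ≠ 0 := ne_of_gt (hxpos 1)
      have hne2 : c.x 2 ≠ 0 := ne_of_gt (hxpos 2)
      rw [h1, hβ0, ← h3,
        show -(1 / c.x 1) / c.x 2 = (1 / c.x 1) * -(1 / c.x 2) from by ring, h2]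
      field_simp
      ring
    | succ m ih =>
      have hne : c.x (m + 2) ≠ 0 := ne_of_gt (hxpos (m + 2))
      have hne3 : c.x (m + 3) ≠ 0 := ne_of_gt (hxpos (m + 3))
      have hm : β m = -c.x (m + 2) * β (m + 1) := by
        rw [ih]; field_simp
      have h2 : 1 / c.x (m + 3) = c.x (m + 2) - c.a (m + 2) := hinv (m + 2)
      rw [hβrec m, hm,
        show -β (m + 1) / c.x (m + 3) = β (m + 1) * -(1 / c.x (m + 3)) from by ring, h2]
      ring
  have hβ0ne : β 0 ≠ 0 := by
    rw [hβ0]; linarith [(hfrac 0).1]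
  have hβne : ∀ m, β m ≠ 0 := by
    intro m
    induction m with
    | zero => exact hβ0ne
    | succ m ih =>
      rw [hstep m]
      exact div_ne_zero (neg_ne_zero.mpr ih) (ne_of_gt (hxpos (m + 2)))
  have hβpos : ∀ m, 0 < |β m| := fun m => abs_pos.mpr (hβne m)
  -- contraction
  have hdec : ∀ m, |β (m + 1)| < |β m| / 3 := by
    intro m
    rw [hstep m, abs_div, abs_neg, abs_of_pos (hxpos (m + 2))]
    exact div_lt_div_of_pos_left (hβpos m) (by norm_num) (hx3 (m + 2))
  have hchain : ∀ m, k < m → |β m| < |β k| / 3 := by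
    intro m
    induction m with
    | zero => omega
    | succ m ih =>
      intro h
      rcases Nat.lt_or_ge k m with h' | h'
      · have h1 := ih h'
        have h2 := hdec m
        have h3 := hβpos k
        linarith
      · have : k = m := by omega
        subst this
        exact hdec k
  -- positivity of p, q
  have hpq : ∀ m, 1 ≤ c.p m ∧ 1 ≤ c.q m ∧ 1 ≤ c.p (m + 1) ∧ 1 ≤ c.q (m + 1) := by
    intro m
    induction m with
    | zero =>
      refine ⟨?_, ?_, ?_, ?_⟩
      · rw [c.p_zero]; linarith [ha 0]
      · rw [c.q_zero]
      · rw [c.p_one]; nlinarith [ha 0, ha 1]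
      · rw [c.q_one]; linarith [ha 1]
    | succ m ih =>
      obtain ⟨h1, h2, h3, h4⟩ := ih
      refine ⟨h3, h4, ?_, ?_⟩
      · rw [c.p_rec]; nlinarith [ha (m + 2)]
      · rw [c.q_rec]; nlinarith [ha (m + 2)]
  have hBpos : 0 < (c.p n : ℝ) * θ + c.q n := by
    have h1 : (1 : ℝ) ≤ (c.p n : ℝ) := by exact_mod_cast (hpq n).1
    have h2 : (1 : ℝ) ≤ (c.q n : ℝ) := by exact_mod_cast (hpq n).2.1
    nlinarith
  -- main estimate
  have hk2 : 4 * (β n) ^ 2 < (β k) ^ 2 := by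
    have h1 := hchain n hkn
    have h2 := hβpos n
    nlinarith [sq_abs (β n), sq_abs (β k)]
  set B := (c.p n : ℝ) * θ + c.q n with hB
  have hgoal' : |(c.q n : ℝ) * θ - c.p n| = |β n| := rfl
  have hgoalk : (c.q k : ℝ) * θ - c.p k = β k := rfl
  rw [hgoal', hgoalk]
  have hD : 0 < |β n| := hβpos n
  rw [Real.exp_log (div_pos hBpos hD)]
  have hkey : 4 * B * |β n| < β k ^ 2 * (B / |β n|) := by
    have hc : |β n| * (B / |β n|) = B := mul_div_cancel₀ B hD.ne'
    have heq : 4 * B * |β n| = (4 * |β n| ^ 2) * (B / |β n|) := by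
      calc 4 * B * |β n| = 4 * (|β n| * (B / |β n|)) * |β n| := by rw [hc]
        _ = (4 * |β n| ^ 2) * (B / |β n|) := by ring
    rw [heq]
    have h4 : 4 * |β n| ^ 2 < β k ^ 2 := by
      nlinarith [sq_abs (β n)]
    exact mul_lt_mul_of_pos_right h4 (div_pos hBpos hD)
  have hden : (0 : ℝ) < 1 + θ ^ 2 := by positivity
  exact div_lt_div_of_pos_right hkey hden
end

section
/- Let θ > 0 irrational with convergents p_n/q_n, and let p, q be positive integers with gcd(p,q)=1 such that p/q is not a convergent of θ and p/q < θ and p_0/q_0 < p/q. Then there exists a unique n with p_n/q_n < p/q < p_{n+2}/q_{n+2} where also p_n/q_n < p/q < p_{n+1}/q_{n+1}, and for all t ∈ ℝ, (q_{n+1} + θ p_{n+1})²e^{-t} + e^t(p_{n+1} - θ q_{n+1})² < (q + θ p)²e^{-t} + e^t(p - θ q)². -/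
namespace CFData

variable {θ : ℝ} (c : CFData θ)

lemma x_irr (hirr : Irrational θ) : ∀ n, Irrational (c.x n) := by
  intro n
  induction n with
  | zero => rw [c.x_zero]; exact hirr
  | succ n ih =>
    rw [c.x_succ n, one_div]
    have h1 : Irrational (c.x n - c.a n) := by
      simpa using ih.sub_intCast (c.a n)
    exact h1.inv

lemma fract_pos (hirr : Irrational θ) (n : ℕ) : 0 < c.x n - c.a n := by
  rw [c.a_floor n]
  have := Int.fract_pos.mpr (fun h => (c.x_irr hirr n).ne_int ⌊c.x n⌋ (by rw [← h]))
  · unfold Int.fract at this; linarith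
  
lemma fract_lt_one (n : ℕ) : c.x n - c.a n < 1 := by
  rw [c.a_floor n]
  have := Int.fract_lt_one (c.x n)
  unfold Int.fract at this; linarith

lemma x_gt_one (hirr : Irrational θ) (n : ℕ) : 1 < c.x (n + 1) := by
  rw [c.x_succ n]
  have h1 := c.fract_pos hirr n
  have h2 := c.fract_lt_one n
  rw [one_div]
  exact (one_lt_inv_iff₀).mpr ⟨h1, h2⟩

lemma x_inv (hirr : Irrational θ) (n : ℕ) : c.x (n + 1) * (c.x n - c.a n) = 1 := by
  rw [c.x_succ n]
  field_simp [ne_of_gt (c.fract_pos hirr n)]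

lemma a_pos (hirr : Irrational θ) (n : ℕ) : 1 ≤ c.a (n + 1) := by
  rw [c.a_floor (n + 1)]
  exact Int.le_floor.mpr (by exact_mod_cast (c.x_gt_one hirr n).le)

lemma x_gt_a (hirr : Irrational θ) (n : ℕ) : (c.a n : ℝ) < c.x n := by
  have := c.fract_pos hirr n; linarith


lemma q_pos' (hirr : Irrational θ) : ∀ n, 1 ≤ c.q n ∧ 1 ≤ c.q (n + 1) := by
  intro n
  induction n with
  | zero =>
    refine ⟨by rw [c.q_zero], ?_⟩
    rw [c.q_one]; exact c.a_pos hirr 0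
  | succ n ih =>
    refine ⟨ih.2, ?_⟩
    rw [c.q_rec n]
    have ha := c.a_pos hirr (n + 1)
    nlinarith [ih.1, ih.2]

lemma q_pos (hirr : Irrational θ) (n : ℕ) : 1 ≤ c.q n := (c.q_pos' hirr n).1

lemma q_step (hirr : Irrational θ) (n : ℕ) : c.q n ≤ c.q (n + 1) := by
  cases n with
  | zero =>
    rw [c.q_zero, c.q_one]; exact c.a_pos hirr 0
  | succ n =>
    rw [c.q_rec n]
    have := c.a_pos hirr (n + 1)
    nlinarith [c.q_pos hirr n, c.q_pos hirr (n + 1)]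

lemma q_strict (hirr : Irrational θ) (n : ℕ) : c.q (n + 1) < c.q (n + 2) := by
  rw [c.q_rec n]
  have := c.a_pos hirr (n + 1)
  nlinarith [c.q_pos hirr n, c.q_pos hirr (n + 1)]

lemma q_ge (hirr : Irrational θ) : ∀ n : ℕ, (n : ℤ) ≤ c.q n ∧ (n + 1 : ℤ) ≤ c.q (n + 1) := by
  intro n
  induction n with
  | zero => exact ⟨by have := c.q_pos hirr 0; omega, by have := c.q_pos hirr 1; simpa using this⟩
  | succ n ih =>
    refine ⟨by exact_mod_cast ih.2, ?_⟩
    have h := c.q_rec n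
    have := c.a_pos hirr (n + 1)
    have h1 := c.q_pos hirr n
    push_cast
    nlinarith [ih.2]

lemma p_nonneg' (hθ : 0 < θ) (hirr : Irrational θ) : ∀ n, 0 ≤ c.p n ∧ 1 ≤ c.p (n + 1) := by
  have ha0 : 0 ≤ c.a 0 := by
    rw [c.a_floor 0, c.x_zero]
    exact Int.le_floor.mpr (by exact_mod_cast hθ.le)
  intro n
  induction n with
  | zero =>
    refine ⟨by rw [c.p_zero]; exact ha0, ?_⟩
    rw [c.p_one]
    have := c.a_pos hirr 0
    nlinarith
  | succ n ih =>
    refine ⟨ih.2.trans' (by norm_num), ?_⟩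
    rw [c.p_rec n]
    have := c.a_pos hirr (n + 1)
    nlinarith [ih.1, ih.2]

lemma p_pos (hθ : 0 < θ) (hirr : Irrational θ) (n : ℕ) : 1 ≤ c.p (n + 1) :=
  (c.p_nonneg' hθ hirr n).2

lemma p_nonneg (hθ : 0 < θ) (hirr : Irrational θ) (n : ℕ) : 0 ≤ c.p n :=
  (c.p_nonneg' hθ hirr n).1

lemma det : ∀ n, c.p (n + 1) * c.q n - c.p n * c.q (n + 1) = (-1) ^ n := by
  intro n
  induction n with
  | zero => rw [c.p_zero, c.q_zero, c.p_one, c.q_one]; ring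
  | succ n ih =>
    rw [c.p_rec n, c.q_rec n, pow_succ]
    linear_combination (-1 : ℤ) * ih

lemma theta_eq (hirr : Irrational θ) :
    ∀ n, θ * (c.x (n + 2) * c.q (n + 1) + c.q n) = c.x (n + 2) * c.p (n + 1) + c.p n := by
  intro n
  induction n with
  | zero =>
    have h1 : c.x 1 * (θ - c.a 0) = 1 := by
      have := c.x_inv hirr 0; rwa [c.x_zero] at this
    have h2 : c.x 2 * (c.x 1 - c.a 1) = 1 := c.x_inv hirr 1
    have hx1 : c.x 1 ≠ 0 := by nlinarith [c.x_gt_one hirr 0]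
    rw [c.p_zero, c.q_zero, c.p_one, c.q_one]
    have key : c.x 1 * (θ * (c.x 2 * c.a 1 + 1) - (c.x 2 * (c.a 1 * c.a 0 + 1) + c.a 0)) = 0 := by
      linear_combination (c.x 2 * c.a 1 + 1) * h1 - h2
    have := mul_eq_zero.mp key
    rcases this with h | h
    · exact absurd h hx1
    · push_cast
      linarith
  | succ n ih =>
    have h2 : c.x (n + 3) * (c.x (n + 2) - c.a (n + 2)) = 1 := c.x_inv hirr (n + 2)
    rw [c.p_rec n, c.q_rec n]
    push_cast
    linear_combination c.x (n + 3) * ih + ((c.p (n + 1) : ℝ) - θ * c.q (n + 1)) * h2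

lemma signEq (hirr : Irrational θ) (n : ℕ) :
    ((c.p (n + 1) : ℝ) - θ * c.q (n + 1)) * (c.x (n + 2) * c.q (n + 1) + c.q n) = (-1) ^ n := by
  have h := c.theta_eq hirr n
  have hd := c.det n
  have hdr : ((c.p (n + 1) : ℝ)) * c.q n - (c.p n : ℝ) * c.q (n + 1) = (-1) ^ n := by
    exact_mod_cast hd
  linear_combination (-(c.q (n + 1) : ℝ)) * h + hdr

lemma D_pos (hirr : Irrational θ) (n : ℕ) :
    (c.q (n + 2) : ℝ) < c.x (n + 2) * c.q (n + 1) + c.q n := by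
  have hx := c.x_gt_a hirr (n + 2)
  have hq1 : (1 : ℝ) ≤ c.q (n + 1) := by exact_mod_cast c.q_pos hirr (n + 1)
  have h := c.q_rec n
  have : (c.q (n + 2) : ℝ) = c.a (n + 2) * c.q (n + 1) + c.q n := by exact_mod_cast h
  rw [this]
  nlinarith


lemma qR_pos (hirr : Irrational θ) (n : ℕ) : (0 : ℝ) < c.q n := by
  have := c.q_pos hirr n
  exact_mod_cast (by omega : (0 : ℤ) < c.q n)

lemma D_pos' (hirr : Irrational θ) (n : ℕ) : (0 : ℝ) < c.x (n + 2) * c.q (n + 1) + c.q n := by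
  have h := c.D_pos hirr n
  have : (1 : ℝ) ≤ c.q (n + 2) := by exact_mod_cast c.q_pos hirr (n + 2)
  linarith

lemma conv_even_lt (hirr : Irrational θ) : ∀ n, Even n → (c.p n : ℝ) / c.q n < θ := by
  intro n hn
  cases n with
  | zero =>
    rw [c.p_zero, c.q_zero]
    have h1 : (c.a 0 : ℝ) < θ := by
      rw [c.a_floor 0, c.x_zero]
      exact lt_of_le_of_ne (Int.floor_le θ) (fun h => (hirr.ne_int ⌊θ⌋) h.symm)
    simpa using h1
  | succ m =>
    have hm : Odd m := by rcases hn with ⟨k, hk⟩; exact ⟨k - 1, by omega⟩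
    have hs := c.signEq hirr m
    rw [hm.neg_one_pow] at hs
    have hD := c.D_pos' hirr m
    have hneg : (c.p (m + 1) : ℝ) - θ * c.q (m + 1) < 0 := by nlinarith
    have hQ : (0 : ℝ) < c.q (m + 1) := c.qR_pos hirr (m+1)
    rw [div_lt_iff₀ hQ]
    linarith

lemma conv_odd_gt (hirr : Irrational θ) : ∀ n, Odd n → θ < (c.p n : ℝ) / c.q n := by
  intro n hn
  obtain ⟨m, rfl⟩ : ∃ m, n = m + 1 := by rcases hn with ⟨k, hk⟩; exact ⟨2*k, by omega⟩
  have hm : Even m := by rcases hn with ⟨k, hk⟩; exact ⟨k, by omega⟩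
  have hs := c.signEq hirr m
  rw [hm.neg_one_pow] at hs
  have hD := c.D_pos' hirr m
  have hpos : (0 : ℝ) < (c.p (m + 1) : ℝ) - θ * c.q (m + 1) := by nlinarith
  have hQ : (0 : ℝ) < c.q (m + 1) := c.qR_pos hirr (m+1)
  rw [lt_div_iff₀ hQ]
  linarith

lemma approx (hirr : Irrational θ) (n : ℕ) :
    |(c.p (n + 1) : ℝ) - θ * c.q (n + 1)| < 1 / (c.q (n + 2) : ℝ) := by
  have hs := c.signEq hirr n
  have hD := c.D_pos hirr n
  have hq2 : (1 : ℝ) ≤ c.q (n + 2) := by exact_mod_cast c.q_pos hirr (n + 2)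
  have hDpos := c.D_pos' hirr n
  have habs : |(c.p (n + 1) : ℝ) - θ * c.q (n + 1)| * (c.x (n + 2) * c.q (n + 1) + c.q n) = 1 := by
    have := congrArg abs hs
    rwa [abs_mul, abs_of_pos hDpos, abs_pow, abs_neg, abs_one, one_pow] at this
  have heq : |(c.p (n + 1) : ℝ) - θ * c.q (n + 1)| = 1 / (c.x (n + 2) * c.q (n + 1) + c.q n) := by
    rw [eq_div_iff (ne_of_gt hDpos)]; exact habs
  rw [heq]
  apply one_div_lt_one_div_of_lt (by linarith) hD

lemma det2 (n : ℕ) : c.p (n + 2) * c.q n - c.p n * c.q (n + 2) = c.a (n + 2) * (-1) ^ n := by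
  have := c.det n
  rw [c.p_rec n, c.q_rec n]
  linear_combination c.a (n + 2) * this

lemma even_step (hirr : Irrational θ) (k : ℕ) :
    (c.p (2 * k) : ℝ) / c.q (2 * k) < (c.p (2 * k + 2) : ℝ) / c.q (2 * k + 2) := by
  have hd := c.det2 (2 * k)
  rw [Even.neg_one_pow ⟨k, by ring⟩, mul_one] at hd
  have ha : 1 ≤ c.a (2 * k + 2) := by
    have h := c.a_pos hirr (2 * k + 1); rwa [show 2 * k + 1 + 1 = 2 * k + 2 by omega] at h
  have hq1 : (0 : ℝ) < c.q (2 * k) := c.qR_pos hirr _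
  have hq2 : (0 : ℝ) < c.q (2 * k + 2) := c.qR_pos hirr _
  rw [div_lt_div_iff₀ hq1 hq2]
  have : (1 : ℝ) ≤ (c.p (2 * k + 2) : ℝ) * c.q (2 * k) - (c.p (2 * k) : ℝ) * c.q (2 * k + 2) := by
    have : (1 : ℤ) ≤ c.p (2 * k + 2) * c.q (2 * k) - c.p (2 * k) * c.q (2 * k + 2) := by
      rw [hd]; omega
    exact_mod_cast this
  linarith

lemma even_mono (hirr : Irrational θ) (i j : ℕ) (h : i ≤ j) :
    (c.p (2 * i) : ℝ) / c.q (2 * i) ≤ (c.p (2 * j) : ℝ) / c.q (2 * j) := by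
  induction j with
  | zero => simp [Nat.le_zero.mp h]
  | succ j ih =>
    rcases Nat.lt_or_ge i (j + 1) with hij | hij
    · have h1 := ih (by omega)
      have h2 := c.even_step hirr j
      have : 2 * (j + 1) = 2 * j + 2 := by ring
      rw [this]
      linarith
    · have : i = j + 1 := by omega
      subst this; rfl

end CFData


theorem stmt_13 (θ : ℝ) (hθ : 0 < θ) (hirr : Irrational θ) (c : CFData θ)
    (p q : ℤ) (hp : 0 < p) (hq : 0 < q) (hcop : IsCoprime p q)
    (hnotconv : ¬ ∃ n : ℕ, (p : ℝ) / q = (c.p n : ℝ) / c.q n)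
    (hlt : (p : ℝ) / q < θ)
    (h0 : (c.p 0 : ℝ) / c.q 0 < (p : ℝ) / q) :
    ∃ n : ℕ,
      ((c.p n : ℝ) / c.q n < (p : ℝ) / q ∧ (p : ℝ) / q < (c.p (n + 2) : ℝ) / c.q (n + 2)) ∧
      (∀ m : ℕ,
        ((c.p m : ℝ) / c.q m < (p : ℝ) / q ∧ (p : ℝ) / q < (c.p (m + 2) : ℝ) / c.q (m + 2)) →
        m = n) ∧
      (p : ℝ) / q < (c.p (n + 1) : ℝ) / c.q (n + 1) ∧
      ∀ t : ℝ,
        ((c.q (n + 1) : ℝ) + θ * c.p (n + 1)) ^ 2 * Real.exp (-t) +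
            Real.exp t * ((c.p (n + 1) : ℝ) - θ * c.q (n + 1)) ^ 2 <
          ((q : ℝ) + θ * p) ^ 2 * Real.exp (-t) +
            Real.exp t * ((p : ℝ) - θ * q) ^ 2 := by
  classical
  set r : ℝ := (p : ℝ) / q with hr
  have hqR : (0 : ℝ) < q := by exact_mod_cast hq
  have hne : ∀ m : ℕ, r ≠ (c.p m : ℝ) / c.q m := fun m h => hnotconv ⟨m, h⟩
  -- existence of an even convergent above r
  have hex : ∃ k : ℕ, r < (c.p (2 * k + 2) : ℝ) / c.q (2 * k + 2) := by
    have hε : 0 < θ - r := by linarith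
    obtain ⟨N, hN⟩ := exists_nat_gt (1 / (θ - r))
    have hNpos : 0 < (N : ℝ) := lt_trans (by positivity) hN
    refine ⟨N + 1, ?_⟩
    rw [show 2 * (N + 1) + 2 = (2 * N + 3) + 1 by ring]
    set m := 2 * N + 3 with hm
    have happrox := c.approx hirr m
    have hq2 : ((m : ℝ) + 2) ≤ (c.q (m + 2) : ℝ) := by
      exact_mod_cast (c.q_ge hirr (m + 2)).1
    have hq2pos : (0 : ℝ) < c.q (m + 2) := c.qR_pos hirr (m + 2)
    have hQ1 : (1 : ℝ) ≤ c.q (m + 1) := by exact_mod_cast c.q_pos hirr (m + 1)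
    have hQpos : (0 : ℝ) < c.q (m + 1) := by linarith
    -- the even convergent m+1 is below θ
    have hbelow : (c.p (m + 1) : ℝ) / c.q (m + 1) < θ :=
      c.conv_even_lt hirr (m + 1) ⟨N + 2, by omega⟩
    have hub : θ * c.q (m + 1) - c.p (m + 1) < 1 / (c.q (m + 2) : ℝ) := by
      have h1 : θ * c.q (m + 1) - c.p (m + 1) ≤ |(c.p (m + 1) : ℝ) - θ * c.q (m + 1)| := by
        rw [abs_sub_comm]
        exact le_abs_self _
      linarith
    have hsmall : 1 / (c.q (m + 2) : ℝ) < θ - r := by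
      have h1 : 1 / (c.q (m + 2) : ℝ) ≤ 1 / ((m : ℝ) + 2) := by
        apply one_div_le_one_div_of_le (by positivity) hq2
      have h2 : 1 / ((m : ℝ) + 2) < 1 / (N : ℝ) := by
        apply one_div_lt_one_div_of_lt hNpos
        push_cast [hm]; linarith
      have h3 : 1 / (N : ℝ) < θ - r := by
        rw [div_lt_iff₀ hε] at hN
        rw [div_lt_iff₀ hNpos]
        linarith
      linarith
    have hkey : θ - (c.p (m + 1) : ℝ) / c.q (m + 1) < θ - r := by
      have hchain : θ * c.q (m + 1) - c.p (m + 1) < θ - r := lt_trans hub hsmall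
      have hpos2 : 0 ≤ θ - (c.p (m + 1) : ℝ) / c.q (m + 1) := by linarith
      have : (θ - (c.p (m + 1) : ℝ) / c.q (m + 1)) * c.q (m + 1) =
          θ * c.q (m + 1) - c.p (m + 1) := by
        field_simp
      nlinarith
    linarith
  set K := Nat.find hex with hK
  have hspec : r < (c.p (2 * K + 2) : ℝ) / c.q (2 * K + 2) := Nat.find_spec hex
  have hminK : ∀ j, j < K → ¬ r < (c.p (2 * j + 2) : ℝ) / c.q (2 * j + 2) :=
    fun j hj => Nat.find_min hex hj
  have hleK : ∀ j, r < (c.p (2 * j + 2) : ℝ) / c.q (2 * j + 2) → K ≤ j :=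
    fun j h => Nat.find_le h
  clear_value K
  set n := 2 * K with hn
  have hn1 : (c.p n : ℝ) / c.q n < r := by
    rcases Nat.eq_zero_or_pos K with h | h
    · rw [hn, h]; simpa using h0
    · obtain ⟨j, hj⟩ : ∃ j, K = j + 1 := ⟨K - 1, by omega⟩
      have hmin := hminK j (by omega)
      push_neg at hmin
      have : (c.p (2 * j + 2) : ℝ) / c.q (2 * j + 2) < r :=
        lt_of_le_of_ne hmin (Ne.symm (hne _))
      rw [hn, show 2 * K = 2 * j + 2 by omega]
      exact this
  have hn2 : r < (c.p (n + 2) : ℝ) / c.q (n + 2) := hspec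
  have hn3 : r < (c.p (n + 1) : ℝ) / c.q (n + 1) :=
    lt_trans hlt (c.conv_odd_gt hirr (n + 1) ⟨K, by omega⟩)
  refine ⟨n, ⟨hn1, hn2⟩, ?_, hn3, ?_⟩
  · -- uniqueness
    rintro m ⟨hm1, hm2⟩
    have hmeven : Even m := by
      by_contra hodd
      have := c.conv_odd_gt hirr m (Nat.not_even_iff_odd.mp hodd)
      linarith
    obtain ⟨j, hj⟩ := hmeven
    have hjm : m = 2 * j := by omega
    subst hjm
    have hKj : K ≤ j := hleK j (by rwa [show 2 * j + 2 = 2 * j + 2 from rfl])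
    have hjK : j ≤ K := by
      by_contra hcon
      have hle : K + 1 ≤ j := by omega
      have hmono := c.even_mono hirr (K + 1) j (by omega)
      rw [show 2 * (K + 1) = 2 * K + 2 by ring] at hmono
      linarith
    omega
  · -- the deformation inequality
    intro t
    have hevenn : Even n := ⟨K, by omega⟩
    have hd : c.p (n + 1) * c.q n - c.p n * c.q (n + 1) = 1 := by
      have := c.det n
      rwa [Even.neg_one_pow hevenn] at this
    have hqn : (1 : ℤ) ≤ c.q n := c.q_pos hirr n
    have hqn1 : (1 : ℤ) ≤ c.q (n + 1) := c.q_pos hirr (n + 1)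
    have hqnR : (0 : ℝ) < c.q n := c.qR_pos hirr n
    have hqn1R : (0 : ℝ) < c.q (n + 1) := c.qR_pos hirr (n + 1)
    have hqn2R : (0 : ℝ) < c.q (n + 2) := c.qR_pos hirr (n + 2)
    have hβ : 1 ≤ p * c.q n - q * c.p n := by
      have hR : (c.p n : ℝ) * q < p * c.q n := by
        rw [hr, div_lt_div_iff₀ hqnR hqR] at hn1
        linarith
      have hZ : c.p n * q < p * c.q n := by exact_mod_cast hR
      linarith [Int.lt_iff_add_one_le.mp (show (0 : ℤ) < p * c.q n - q * c.p n by linarith)]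
    have hα : 1 ≤ q * c.p (n + 1) - p * c.q (n + 1) := by
      have hR : (p : ℝ) * c.q (n + 1) < c.p (n + 1) * q := by
        rw [hr, div_lt_div_iff₀ hqR hqn1R] at hn3
        linarith
      have hZ : p * c.q (n + 1) < c.p (n + 1) * q := by exact_mod_cast hR
      linarith [Int.lt_iff_add_one_le.mp
        (show (0 : ℤ) < q * c.p (n + 1) - p * c.q (n + 1) by linarith)]
    have hγ : 1 ≤ q * c.p (n + 2) - p * c.q (n + 2) := by
      have hR : (p : ℝ) * c.q (n + 2) < c.p (n + 2) * q := by
        rw [hr, div_lt_div_iff₀ hqR hqn2R] at hn2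
        linarith
      have hZ : p * c.q (n + 2) < c.p (n + 2) * q := by exact_mod_cast hR
      linarith [Int.lt_iff_add_one_le.mp
        (show (0 : ℤ) < q * c.p (n + 2) - p * c.q (n + 2) by linarith)]
    have hq_id : q = (q * c.p (n + 1) - p * c.q (n + 1)) * c.q n +
        (p * c.q n - q * c.p n) * c.q (n + 1) := by linear_combination (-q) * hd
    have hp_id : p = (q * c.p (n + 1) - p * c.q (n + 1)) * c.p n +
        (p * c.q n - q * c.p n) * c.p (n + 1) := by linear_combination (-p) * hd
    have hpn0 : 0 ≤ c.p n := c.p_nonneg hθ hirr n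
    have hpn1 : 1 ≤ c.p (n + 1) := c.p_pos hθ hirr n
    have hq_ge : c.q n + c.q (n + 1) ≤ q := by
      have e1 : 0 ≤ (q * c.p (n + 1) - p * c.q (n + 1) - 1) * c.q n :=
        mul_nonneg (by linarith) (by linarith)
      have e2 : 0 ≤ (p * c.q n - q * c.p n - 1) * c.q (n + 1) :=
        mul_nonneg (by linarith) (by linarith)
      linarith [hq_id, e1, e2]
    have hp_ge : c.p (n + 1) ≤ p := by
      have e3 : 0 ≤ (q * c.p (n + 1) - p * c.q (n + 1)) * c.p n :=
        mul_nonneg (by linarith) hpn0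
      have e4 : 0 ≤ (p * c.q n - q * c.p n - 1) * c.p (n + 1) :=
        mul_nonneg (by linarith) (by linarith)
      linarith [hp_id, e3, e4]
    -- A side
    have hA : (c.q (n + 1) : ℝ) + θ * c.p (n + 1) < (q : ℝ) + θ * p := by
      have h1 : (c.q (n + 1) : ℝ) < q := by
        have : c.q (n + 1) < q := by linarith
        exact_mod_cast this
      have h2 : (c.p (n + 1) : ℝ) ≤ p := by exact_mod_cast hp_ge
      have h3 := mul_le_mul_of_nonneg_left h2 hθ.le
      linarith
    have hApos : (0 : ℝ) < (c.q (n + 1) : ℝ) + θ * c.p (n + 1) := by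
      have h2 : (1 : ℝ) ≤ c.p (n + 1) := by exact_mod_cast hpn1
      have h3 := mul_nonneg hθ.le (le_trans zero_le_one h2)
      linarith
    have hA2 : ((c.q (n + 1) : ℝ) + θ * c.p (n + 1)) ^ 2 < ((q : ℝ) + θ * p) ^ 2 := by
      have h4 := mul_lt_mul'' hA hA hApos.le hApos.le
      nlinarith [h4]
    -- B side
    have happrox := c.approx hirr n
    have hconv2 : (c.p (n + 2) : ℝ) / c.q (n + 2) < θ :=
      c.conv_even_lt hirr (n + 2) ⟨K + 1, by omega⟩
    have hγR : (1 : ℝ) ≤ (q : ℝ) * c.p (n + 2) - p * c.q (n + 2) := by exact_mod_cast hγ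
    have hB1 : 1 / (c.q (n + 2) : ℝ) < θ * q - p := by
      have step1 : 1 / (c.q (n + 2) : ℝ) ≤
          ((q : ℝ) * c.p (n + 2) - p * c.q (n + 2)) / c.q (n + 2) :=
        (div_le_div_iff_of_pos_right hqn2R).mpr hγR
      have step2 : ((q : ℝ) * c.p (n + 2) - p * c.q (n + 2)) / c.q (n + 2) =
          (q : ℝ) * ((c.p (n + 2) : ℝ) / c.q (n + 2)) - p := by
        field_simp
      have step3 : (q : ℝ) * ((c.p (n + 2) : ℝ) / c.q (n + 2)) < q * θ :=
        mul_lt_mul_of_pos_left hconv2 hqR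
      rw [step2] at step1
      linarith
    have hB2 : ((c.p (n + 1) : ℝ) - θ * c.q (n + 1)) ^ 2 < ((p : ℝ) - θ * q) ^ 2 := by
      have habs : |(c.p (n + 1) : ℝ) - θ * c.q (n + 1)| < θ * q - p := lt_trans happrox hB1
      obtain ⟨h1', h2'⟩ := abs_lt.mp habs
      have h3' : ((c.p (n + 1) : ℝ) - θ * c.q (n + 1)) ^ 2 < (θ * q - p) ^ 2 := sq_lt_sq' h1' h2'
      have h4' : ((p : ℝ) - θ * q) ^ 2 = (θ * q - p) ^ 2 := by ring
      linarith
    have he1 : (0 : ℝ) < Real.exp (-t) := Real.exp_pos _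
    have he2 : (0 : ℝ) < Real.exp t := Real.exp_pos _
    have g1 := mul_lt_mul_of_pos_right hA2 he1
    have g2 := mul_lt_mul_of_pos_left hB2 he2
    linarith
end

section
/- Let θ > 0 irrational with convergents p_n/q_n, and assume the elements a_n → ∞. Let T_n = log((p_nθ + q_n)/|q_nθ - p_n|) and l_{T_n}² = 2(q_n + p_nθ)|q_nθ - p_n|/(1+θ²). Then l_{T_n}²·a_{n+1} → 2 as n → ∞, i.e. l_{T_n}² ≈ 2/a_{n+1}. -/
namespace CFAux

variable {θ : ℝ}

/-- previous-index `p`, with `pp 0 = 1`. -/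
def pp (c : CFData θ) : ℕ → ℤ := fun n => match n with | 0 => 1 | k+1 => c.p k
/-- previous-index `q`, with `qq 0 = 0`. -/
def qq (c : CFData θ) : ℕ → ℤ := fun n => match n with | 0 => 0 | k+1 => c.q k

lemma x_irr (c : CFData θ) (hirr : Irrational θ) : ∀ n, Irrational (c.x n) := by
  intro n
  induction n with
  | zero => rw [c.x_zero]; exact hirr
  | succ n ih =>
    rw [c.x_succ, one_div, c.a_floor]
    exact (Irrational.sub_intCast ih _).inv

lemma fract_pos (c : CFData θ) (hirr : Irrational θ) (n : ℕ) :
    0 < c.x n - c.a n := by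
  rw [c.a_floor]
  have h := Int.fract_pos.mpr ((x_irr c hirr n).ne_int ⌊c.x n⌋)
  rwa [Int.fract] at h

lemma x_gt_one (c : CFData θ) (hirr : Irrational θ) (n : ℕ) : 1 < c.x (n+1) := by
  rw [c.x_succ]
  have h1 : 0 < c.x n - c.a n := fract_pos c hirr n
  have h2 : c.x n - c.a n < 1 := by
    rw [c.a_floor]
    have := Int.fract_lt_one (c.x n)
    rw [Int.fract] at this; linarith
  rw [lt_div_iff₀ h1]; linarith

lemma a_ge_one (c : CFData θ) (hirr : Irrational θ) (n : ℕ) : 1 ≤ c.a (n+1) := by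
  rw [c.a_floor]
  exact Int.le_floor.mpr (by exact_mod_cast (x_gt_one c hirr n).le)

lemma q_bnd (c : CFData θ) (hirr : Irrational θ) :
    ∀ n, 1 ≤ c.q n ∧ c.q n ≤ c.q (n+1) := by
  intro n
  induction n with
  | zero =>
    refine ⟨by rw [c.q_zero], ?_⟩
    rw [c.q_zero, c.q_one]; exact a_ge_one c hirr 0
  | succ n ih =>
    have h1 : 1 ≤ c.q (n+1) := le_trans ih.1 ih.2
    refine ⟨h1, ?_⟩
    rw [c.q_rec n]
    have hq : c.q (n+1) ≤ c.a (n+2) * c.q (n+1) :=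
      le_mul_of_one_le_left (by linarith) (a_ge_one c hirr (n+1))
    linarith

lemma q_ge (c : CFData θ) (hirr : Irrational θ) :
    ∀ n : ℕ, (n : ℤ) ≤ c.q n ∧ ((n:ℤ) + 1) ≤ c.q (n+1) := by
  intro n
  induction n with
  | zero =>
    exact ⟨by rw [c.q_zero]; norm_num, by rw [c.q_one]; simpa using a_ge_one c hirr 0⟩
  | succ n ih =>
    refine ⟨by exact_mod_cast ih.2, ?_⟩
    rw [c.q_rec n]
    have h1 := (q_bnd c hirr n).1
    have h2 := (q_bnd c hirr (n+1)).1
    have hq : c.q (n+1) ≤ c.a (n+2) * c.q (n+1) :=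
      le_mul_of_one_le_left (by linarith) (a_ge_one c hirr (n+1))
    push_cast
    linarith [ih.2]

lemma qq_bnd (c : CFData θ) (hirr : Irrational θ) (n : ℕ) :
    0 ≤ qq c n ∧ qq c n ≤ c.q n := by
  cases n with
  | zero => simp [qq, c.q_zero]
  | succ n => exact ⟨le_trans zero_le_one (q_bnd c hirr n).1, (q_bnd c hirr n).2⟩

lemma q_rec' (c : CFData θ) (n : ℕ) : c.q (n+1) = c.a (n+1) * c.q n + qq c n := by
  cases n with
  | zero => simp [qq, c.q_zero, c.q_one]
  | succ n => simpa [qq] using c.q_rec n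

lemma p_rec' (c : CFData θ) (n : ℕ) : c.p (n+1) = c.a (n+1) * c.p n + pp c n := by
  cases n with
  | zero => simp [pp, c.p_zero, c.p_one]
  | succ n => simpa [pp] using c.p_rec n

lemma x_inv (c : CFData θ) (hirr : Irrational θ) (n : ℕ) :
    c.x (n+1) * (c.x n - c.a n) = 1 := by
  rw [c.x_succ]
  exact one_div_mul_cancel (ne_of_gt (fract_pos c hirr n))

lemma key (c : CFData θ) (hirr : Irrational θ) :
    ∀ n, θ * (c.x (n+1) * c.q n + qq c n) = c.x (n+1) * c.p n + pp c n := by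
  intro n
  induction n with
  | zero =>
    have h := x_inv c hirr 0
    rw [c.x_zero] at h
    simp only [pp, qq, c.p_zero, c.q_zero]
    push_cast
    linear_combination h
  | succ n ih =>
    have hinv : c.x (n+2) * (c.x (n+1) - c.a (n+1)) = 1 := x_inv c hirr (n+1)
    have hq : (c.q (n+2) : ℝ) = c.a (n+2) * c.q (n+1) + c.q n := by
      exact_mod_cast congrArg Int.cast (c.q_rec n)
    have hq1 : (c.q (n+1) : ℝ) = c.a (n+1) * c.q n + qq c n := by
      exact_mod_cast congrArg Int.cast (q_rec' c n)
    have hp1 : (c.p (n+1) : ℝ) = c.a (n+1) * c.p n + pp c n := by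
      exact_mod_cast congrArg Int.cast (p_rec' c n)
    show θ * (c.x (n+2) * c.q (n+1) + (c.q n : ℝ)) = c.x (n+2) * c.p (n+1) + (c.p n : ℝ)
    rw [hq1, hp1]
    linear_combination c.x (n+2) * ih - (θ * (c.q n : ℝ) - (c.p n : ℝ)) * hinv

lemma det (c : CFData θ) : ∀ n, c.q n * pp c n - c.p n * qq c n = (-1)^n := by
  intro n
  induction n with
  | zero => simp [pp, qq, c.q_zero]
  | succ n ih =>
    show c.q (n+1) * c.p n - c.p (n+1) * c.q n = (-1)^(n+1)
    rw [q_rec' c n, p_rec' c n]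
    ring_nf
    ring_nf at ih
    linarith

lemma err (c : CFData θ) (hirr : Irrational θ) (n : ℕ) :
    ((c.q n : ℝ) * θ - c.p n) * (c.x (n+1) * c.q n + qq c n) = (-1)^n := by
  have hdet : (c.q n : ℝ) * (pp c n : ℝ) - (c.p n : ℝ) * (qq c n : ℝ) = (-1)^n := by
    exact_mod_cast congrArg Int.cast (det c n)
  linear_combination (c.q n : ℝ) * key c hirr n + hdet

lemma denom_pos (c : CFData θ) (hirr : Irrational θ) (n : ℕ) :
    (c.q n : ℝ) ≤ c.x (n+1) * c.q n + qq c n := by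
  have hq : (1:ℝ) ≤ c.q n := by exact_mod_cast (q_bnd c hirr n).1
  have hx := x_gt_one c hirr n
  have hqq : (0:ℝ) ≤ qq c n := by exact_mod_cast (qq_bnd c hirr n).1
  nlinarith

lemma abs_err (c : CFData θ) (hirr : Irrational θ) (n : ℕ) :
    |(c.q n : ℝ) * θ - c.p n| = 1 / (c.x (n+1) * c.q n + qq c n) := by
  have hD : (0:ℝ) < c.x (n+1) * c.q n + qq c n :=
    lt_of_lt_of_le (by exact_mod_cast lt_of_lt_of_le zero_lt_one (q_bnd c hirr n).1)
      (denom_pos c hirr n)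
  have h := err c hirr n
  have : (c.q n : ℝ) * θ - c.p n = (-1)^n / (c.x (n+1) * c.q n + qq c n) := by
    rw [eq_div_iff hD.ne']
    linear_combination h
  rw [this, abs_div, abs_pow, abs_neg, abs_one, one_pow, abs_of_pos hD]

end CFAux

open Filter Topology CFAux in
theorem stmt_16 (θ : ℝ) (hθ : 0 < θ) (hirr : Irrational θ) (c : CFData θ)
    (ha : Filter.Tendsto (fun n : ℕ => (c.a n : ℝ)) Filter.atTop Filter.atTop) :
    Filter.Tendsto (fun n : ℕ =>
        (2 * ((c.q n : ℝ) + (c.p n : ℝ) * θ) * |(c.q n : ℝ) * θ - c.p n| / (1 + θ ^ 2)) *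
          (c.a (n + 1) : ℝ))
      Filter.atTop (nhds 2) := by
  set D : ℕ → ℝ := fun n => c.x (n+1) * c.q n + qq c n with hD
  have hq1 : ∀ n, (1:ℝ) ≤ c.q n := fun n => by exact_mod_cast (q_bnd c hirr n).1
  have hqpos : ∀ n, (0:ℝ) < c.q n := fun n => lt_of_lt_of_le zero_lt_one (hq1 n)
  have hDq : ∀ n, (c.q n : ℝ) ≤ D n := fun n => denom_pos c hirr n
  have hDpos : ∀ n, 0 < D n := fun n => lt_of_lt_of_le (hqpos n) (hDq n)
  have hqn : ∀ n : ℕ, (n:ℝ) ≤ c.q n := fun n => by exact_mod_cast (q_ge c hirr n).1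
  have ha1 : ∀ n, (1:ℝ) ≤ c.a (n+1) := fun n => by exact_mod_cast a_ge_one c hirr n
  have hqq0 : ∀ n, (0:ℝ) ≤ qq c n := fun n => by exact_mod_cast (qq_bnd c hirr n).1
  have hqqq : ∀ n, (qq c n : ℝ) ≤ c.q n := fun n => by exact_mod_cast (qq_bnd c hirr n).2
  have hxlb : ∀ n, (c.a (n+1) : ℝ) ≤ c.x (n+1) := fun n => by
    rw [c.a_floor]; exact Int.floor_le _
  have hxub : ∀ n, c.x (n+1) < (c.a (n+1) : ℝ) + 1 := fun n => by
    rw [c.a_floor]; exact Int.lt_floor_add_one _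
  have hDub : ∀ n, D n ≤ ((c.a (n+1) : ℝ) + 2) * c.q n := by
    intro n
    have h1 := hxub n; have h2 := hqqq n; have h3 := hqpos n
    simp only [hD]
    nlinarith
  -- convergents tend to θ
  have hpq0 : Tendsto (fun n => ((c.q n : ℝ) * θ - c.p n) / c.q n) atTop (𝓝 0) := by
    refine squeeze_zero_norm' (a := fun n : ℕ => 1 / (n:ℝ)) ?_ tendsto_one_div_atTop_nhds_zero_nat
    · filter_upwards [eventually_ge_atTop 1] with n hn
      have hn1 : (1:ℝ) ≤ (n:ℝ) := by exact_mod_cast hn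
      have habs : |(c.q n : ℝ) * θ - c.p n| = 1 / D n := abs_err c hirr n
      rw [Real.norm_eq_abs, abs_div, habs, abs_of_pos (hqpos n)]
      rw [div_div]
      apply div_le_div_of_nonneg_left zero_le_one (by linarith)
      calc (n:ℝ) = n * 1 := by ring
        _ ≤ D n * c.q n := by
            apply mul_le_mul (le_trans (hqn n) (hDq n)) (hq1 n) zero_le_one
            exact (hDpos n).le
  have hpq : Tendsto (fun n => (c.p n : ℝ) / c.q n) atTop (𝓝 θ) := by
    have h := tendsto_const_nhds (α := ℕ) (x := θ) |>.sub hpq0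
    rw [sub_zero] at h
    refine h.congr fun n => ?_
    have hq := (hqpos n).ne'
    field_simp
    ring
  have t1 : Tendsto (fun n => ((c.q n : ℝ) + c.p n * θ) / c.q n) atTop (𝓝 (1 + θ^2)) := by
    have h := tendsto_const_nhds (α := ℕ) (x := (1:ℝ)) |>.add (hpq.mul_const θ)
    have hv : (1:ℝ) + θ * θ = 1 + θ^2 := by ring
    rw [hv] at h
    refine h.congr fun n => ?_
    have := (hqpos n).ne'
    field_simp
  have ha' : Tendsto (fun n : ℕ => (c.a (n+1) : ℝ)) atTop atTop :=
    ha.comp (tendsto_add_atTop_nat 1)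
  have hf : Tendsto (fun t : ℝ => t / (t + 2)) atTop (𝓝 1) := by
    have h2 : Tendsto (fun t : ℝ => 2 / (t + 2)) atTop (𝓝 0) :=
      Tendsto.div_atTop tendsto_const_nhds (tendsto_atTop_add_const_right _ 2 tendsto_id)
    have h := tendsto_const_nhds (α := ℝ) (x := (1:ℝ)) |>.sub h2
    rw [sub_zero] at h
    refine h.congr' ?_
    filter_upwards [eventually_ge_atTop (0:ℝ)] with t ht
    have : t + 2 ≠ 0 := by linarith
    field_simp
    ring
  have hg : Tendsto (fun n : ℕ => (c.a (n+1) : ℝ) / ((c.a (n+1) : ℝ) + 2)) atTop (𝓝 1) :=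
    hf.comp ha'
  have t2 : Tendsto (fun n => (c.a (n+1) : ℝ) * c.q n / D n) atTop (𝓝 1) := by
    apply tendsto_of_tendsto_of_tendsto_of_le_of_le hg tendsto_const_nhds
    · intro n
      rw [div_le_div_iff₀ (by linarith [ha1 n]) (hDpos n)]
      have h1 := hDub n
      have h2 := ha1 n
      nlinarith
    · intro n
      rw [div_le_one (hDpos n)]
      have h1 := hxlb n
      have h2 := hqq0 n
      have h3 := (hqpos n).le
      simp only [hD]
      nlinarith
  have hθ2 : (1:ℝ) + θ^2 ≠ 0 := by positivity
  have T := (tendsto_const_nhds (α := ℕ) (x := 2/(1+θ^2)) |>.mul t1).mul t2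
  have hval : 2/(1+θ^2) * (1+θ^2) * 1 = (2:ℝ) := by field_simp
  rw [hval] at T
  refine T.congr fun n => ?_
  rw [abs_err c hirr n]
  rw [show c.x (n+1) * c.q n + qq c n = D n from rfl]
  have h1 := (hDpos n).ne'
  have h2 := (hqpos n).ne'
  field_simp
end
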